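/- (Double centralizer theorem over fields, type A instance.) Let F be a field, let n ≥ 3, and let g ∈ SL_n(F). Suppose that g commutes with every transvection t_{kl}(1) = 1 + E_{kl} with k ≠ l, k ≠ 2 and l ≠ 1 (indices 1-based). Then there exist ω ∈ F and r ∈ F with ω^n = 1 such that g = ω • (1 + r • E_{12}); i.e. g is a central scalar matrix times an elementary transvection t_{12}(r). -/

import Mathlib

open Matrix

/-- Double centralizer theorem over a field, type A instance: if `g ∈ SL_n(F)` (`n ≥ 3`)
commutes with all elementary transvections `t_{kl}(1) = 1 + E_{kl}` with `k ≠ l`, `k ≠ 2`,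
`l ≠ 1` (1-based indices), then `g = ω • t_{12}(r)` for some scalar `ω` with `ω^n = 1`
(so `ω • 1` is central in `SL_n(F)`) and some `r ∈ F`. -/
theorem double_centralizer_field_typeA {F : Type*} [Field F] {n : ℕ} (hn : 3 ≤ n)
    (g : Matrix.SpecialLinearGroup (Fin n) F)
    (hg : ∀ k l : Fin n, k ≠ l → k ≠ ⟨1, by omega⟩ → l ≠ ⟨0, by omega⟩ →
      (g : Matrix (Fin n) (Fin n) F) * (1 + single k l 1) =
        (1 + single k l 1) * (g : Matrix (Fin n) (Fin n) F)) :
    ∃ ω r : F, ω ^ n = 1 ∧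
      (g : Matrix (Fin n) (Fin n) F) =
        ω • (1 + r • single (⟨0, by omega⟩ : Fin n) (⟨1, by omega⟩ : Fin n) 1) := by
  set i0 : Fin n := ⟨0, by omega⟩ with hi0
  set i1 : Fin n := ⟨1, by omega⟩ with hi1
  have hi01 : i0 ≠ i1 := by simp [hi0, hi1, Fin.ext_iff]
  set M : Matrix (Fin n) (Fin n) F := (g : Matrix (Fin n) (Fin n) F) with hM
  -- commutation with the elementary matrix itself
  have key : ∀ k l : Fin n, k ≠ l → k ≠ i1 → l ≠ i0 →
      M * single k l 1 = single k l 1 * M := by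
    intro k l h1 h2 h3
    have H := hg k l h1 h2 h3
    rw [mul_add, add_mul, mul_one, one_mul] at H
    exact add_left_cancel H
  -- there is always a third index
  have exists_third : ∀ x y : Fin n, ∃ z : Fin n, z ≠ x ∧ z ≠ y := by
    intro x y
    have hcard : ({x, y} : Finset (Fin n)).card < Fintype.card (Fin n) := by
      have h1 : ({x, y} : Finset (Fin n)).card ≤ 2 :=
        (Finset.card_insert_le x {y}).trans (by simp)
      simp only [Fintype.card_fin]
      omega
    have hne : ({x, y} : Finset (Fin n)) ≠ Finset.univ :=
      (Finset.card_lt_iff_ne_univ _).mp hcard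
    obtain ⟨z, hz⟩ : ∃ z, z ∉ ({x, y} : Finset (Fin n)) := by
      by_contra h
      push_neg at h
      exact hne (Finset.eq_univ_iff_forall.2 h)
    simp only [Finset.mem_insert, Finset.mem_singleton, not_or] at hz
    exact ⟨z, hz.1, hz.2⟩
  -- off-diagonal entries vanish, except possibly at (i0, i1)
  have hoff : ∀ a b : Fin n, a ≠ b → ¬(a = i0 ∧ b = i1) → M a b = 0 := by
    intro a b hab hne
    by_cases hb1 : b = i1
    · subst hb1
      have ha0 : a ≠ i0 := fun h => hne ⟨h, rfl⟩
      obtain ⟨k, hka, hk1⟩ := exists_third a i1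
      have H := congrFun (congrFun (key k a hka hk1 ha0) k) i1
      rw [mul_single_apply_of_ne (hbj := Ne.symm hab),
        single_mul_apply_same] at H
      simpa using H.symm
    · obtain ⟨l, hl0, hlb⟩ := exists_third i0 b
      have H := congrFun (congrFun (key b l (Ne.symm hlb) hb1 hl0) a) l
      rw [mul_single_apply_same,
        single_mul_apply_of_ne (h := hab)] at H
      simpa using H
  -- all diagonal entries are equal
  have hdiag : ∀ a : Fin n, M a a = M i0 i0 := by
    intro a
    by_cases ha : a = i0
    · rw [ha]
    · have H := congrFun (congrFun (key i0 a (Ne.symm ha) hi01 ha) i0) a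
      rw [mul_single_apply_same, single_mul_apply_same] at H
      simpa using H.symm
  set ω : F := M i0 i0 with hω
  -- determinant is ω ^ n
  have htri : M.BlockTriangular id := by
    intro a b hba
    refine hoff a b (fun h => ?_) (fun h => ?_)
    · subst h; exact lt_irrefl _ hba
    · obtain ⟨rfl, rfl⟩ := h
      simp [hi0, hi1, Fin.lt_def] at hba
  have hdet : M.det = 1 := g.prop
  have hωn : ω ^ n = 1 := by
    rw [Matrix.det_of_upperTriangular htri] at hdet
    rw [← hdet]
    simp [hdiag, Finset.prod_const, Finset.card_univ]
  have hω0 : ω ≠ 0 := by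
    intro h
    rw [h, zero_pow (by omega)] at hωn
    exact zero_ne_one hωn
  have hstd0 : ∀ (c : F) (a b : Fin n), ¬(a = i0 ∧ b = i1) →
      single i0 i1 c a b = 0 := by
    intro c a b h
    simp only [single, of_apply, ite_eq_right_iff, and_imp]
    intro h1 h2
    exact absurd ⟨h1.symm, h2.symm⟩ h
  refine ⟨ω, M i0 i1 / ω, hωn, ?_⟩
  ext a b
  by_cases hab : a = b
  · subst hab
    have h' : ¬(a = i0 ∧ a = i1) := fun h => hi01 (h.1.symm.trans h.2)
    simp [one_apply, hstd0 _ a a h', hdiag a]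
  · by_cases h0 : a = i0 ∧ b = i1
    · obtain ⟨rfl, rfl⟩ := h0
      simp only [Matrix.smul_apply, Matrix.add_apply, one_apply_ne hi01, smul_single, smul_eq_mul,
        mul_one]
      simp only [single, of_apply, and_self, if_pos (And.intro rfl rfl)]
      rw [if_pos trivial, zero_add, mul_div_cancel₀ _ hω0]
    · simp [hoff a b hab h0, one_apply, hab, hstd0 _ a b h0]
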